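/- Define A, B : ℕ → ℤ by A(-1)=1, A(0)=3, B(-1)=0, B(0)=1, and A(n)=(n+3)A(n-1)-n·A(n-2), B(n)=(n+3)B(n-1)-n·B(n-2) for n≥1. Then the sequence A(n)/B(n) (as real numbers) converges to e. -/

import Mathlib

open Filter Finset
open scoped Topology

/-- t n = ∑_{k=0}^n n!/k! as an integer. -/
def cfT : ℕ → ℤ
  | 0 => 1
  | n + 1 => (n + 1) * cfT n + 1

lemma cfT_pos (n : ℕ) : 0 < cfT n := by
  induction n with
  | zero => simp [cfT]
  | succ n ih => simp only [cfT]; positivity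

lemma cfT_div_factorial (n : ℕ) :
    (cfT n : ℝ) / (n.factorial : ℝ) = ∑ k ∈ Finset.range (n + 1), 1 / (k.factorial : ℝ) := by
  induction n with
  | zero => simp [cfT]
  | succ n ih =>
    rw [Finset.sum_range_succ, ← ih]
    have h1 : ((n.factorial : ℝ)) ≠ 0 := by positivity
    have h2 : (((n + 1).factorial : ℝ)) ≠ 0 := by positivity
    rw [cfT]
    push_cast
    rw [Nat.factorial_succ] at h2 ⊢
    push_cast
    field_simp

theorem stmt13 (A B : ℤ → ℤ)
    (hA1 : A (-1) = 1) (hA0 : A 0 = 3) (hB1 : B (-1) = 0) (hB0 : B 0 = 1)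
    (hArec : ∀ n : ℤ, 1 ≤ n → A n = (n + 3) * A (n - 1) - n * A (n - 2))
    (hBrec : ∀ n : ℤ, 1 ≤ n → B n = (n + 3) * B (n - 1) - n * B (n - 2)) :
    Filter.Tendsto (fun n : ℕ => (A (n : ℤ) : ℝ) / (B (n : ℤ) : ℝ))
      Filter.atTop (nhds (Real.exp 1)) := by
  -- closed forms
  have key : ∀ n : ℕ, A n = (n + 1) * cfT (n + 1) + 1 ∧ B n = (n + 1) * (n + 1).factorial := by
    intro n
    induction n using Nat.strong_induction_on with
    | _ n ih =>
      match n with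
      | 0 => constructor <;> simp [hA0, hB0, cfT]
      | 1 =>
        have hA := hArec 1 le_rfl
        have hB := hBrec 1 le_rfl
        norm_num at hA hB
        rw [hA0, hA1] at hA
        rw [hB0, hB1] at hB
        constructor
        · push_cast
          rw [hA]; norm_num [cfT]
        · push_cast
          rw [hB]; norm_num [Nat.factorial]
      | (m + 2) =>
        obtain ⟨ha1, hb1⟩ := ih (m + 1) (by omega)
        obtain ⟨ha2, hb2⟩ := ih m (by omega)
        have hA := hArec (m + 2) (by omega)
        have hB := hBrec (m + 2) (by omega)
        have e1 : ((m : ℤ) + 2) - 1 = ((m + 1 : ℕ) : ℤ) := by push_cast; ring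
        have e2 : ((m : ℤ) + 2) - 2 = ((m : ℕ) : ℤ) := by push_cast; ring
        push_cast at hA hB
        rw [e1, e2] at hA hB
        rw [ha1, ha2] at hA
        rw [hb1, hb2] at hB
        constructor
        · push_cast
          rw [hA]
          show _ = ((m : ℤ) + 2 + 1) * cfT (m + 3) + 1
          have ht3 : cfT (m + 3) = ((m : ℤ) + 3) * cfT (m + 2) + 1 := by
            show cfT (m + 2 + 1) = _; rw [cfT]; push_cast; ring
          have ht2 : cfT (m + 2) = ((m : ℤ) + 2) * cfT (m + 1) + 1 := by
            show cfT (m + 1 + 1) = _; rw [cfT]; push_cast; ring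
          rw [ht3, ht2]
          push_cast
          ring
        · push_cast
          rw [hB]
          show _ = ((m : ℤ) + 2 + 1) * ((m + 3).factorial : ℤ)
          have f3 : ((m + 3).factorial : ℤ) = ((m : ℤ) + 3) * (m + 2).factorial := by
            rw [show m + 3 = (m + 2) + 1 from rfl, Nat.factorial_succ]; push_cast; ring
          have f2 : ((m + 2).factorial : ℤ) = ((m : ℤ) + 2) * (m + 1).factorial := by
            rw [show m + 2 = (m + 1) + 1 from rfl, Nat.factorial_succ]; push_cast; ring
          rw [f3, f2]
          push_cast
          ring
  have hform : ∀ n : ℕ, (A (n : ℤ) : ℝ) / (B (n : ℤ) : ℝ) =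
      (∑ k ∈ Finset.range (n + 2), 1 / (k.factorial : ℝ)) + 1 / ((n + 1) * (n + 1).factorial) := by
    intro n
    obtain ⟨ha, hb⟩ := key n
    rw [ha, hb, ← cfT_div_factorial (n + 1)]
    have h1 : (0 : ℝ) < (n : ℝ) + 1 := by positivity
    have h2 : (0 : ℝ) < ((n + 1).factorial : ℝ) := by positivity
    push_cast
    field_simp
  simp_rw [hform]
  have hsum : Tendsto (fun n : ℕ => ∑ k ∈ Finset.range (n + 2), 1 / (k.factorial : ℝ))
      atTop (𝓝 (Real.exp 1)) := by
    rw [tendsto_add_atTop_iff_nat (f := fun n => ∑ k ∈ Finset.range n, 1 / (k.factorial : ℝ)) 2]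
    have := (NormedSpace.expSeries_div_hasSum_exp (1 : ℝ)).tendsto_sum_nat
    rw [Real.exp_eq_exp_ℝ]
    simpa [one_div] using this
  have htail : Tendsto (fun n : ℕ => 1 / (((n : ℝ) + 1) * ((n + 1).factorial : ℝ)))
      atTop (𝓝 0) := by
    apply squeeze_zero (fun n => by positivity) (g := fun n : ℕ => 1 / ((n : ℝ) + 1))
    · intro n
      apply one_div_le_one_div_of_le (by positivity)
      have : (1 : ℝ) ≤ ((n + 1).factorial : ℝ) := by
        exact_mod_cast Nat.one_le_iff_ne_zero.mpr (Nat.factorial_ne_zero _)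
      nlinarith [Nat.cast_nonneg (α := ℝ) n]
    · exact tendsto_one_div_add_atTop_nhds_zero_nat
  simpa using hsum.add htail
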